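/- Let P ∈ F_q[T] be a monic irreducible polynomial, and suppose P = A² + T·B² for some A, B ∈ F_q[T]. Then, viewing A and B inside F_q[S] via T = −S², both polynomials A(−S²) + S·B(−S²) and A(−S²) − S·B(−S²) are irreducible in F_q[S]. -/

import Mathlib

open Polynomial

private lemma key_irred (F : Type) [Field F] (P A B : F[X]) (hP : P.Monic)
    (hirr : Irreducible P) (hPAB : P = A ^ 2 + X * B ^ 2) :
    Irreducible (A.comp (-(X ^ 2)) + X * B.comp (-(X ^ 2))) := by
  set f : F[X] := A.comp (-(X ^ 2)) + X * B.comp (-(X ^ 2)) with hf_def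
  set f' : F[X] := A.comp (-(X ^ 2)) - X * B.comp (-(X ^ 2)) with hf'_def
  have hprod : f * f' = P.comp (-(X ^ 2)) := by
    rw [hPAB]
    simp only [hf_def, hf'_def, add_comp, mul_comp, pow_comp, X_comp]
    ring
  have hnpos : 0 < P.natDegree := hirr.natDegree_pos
  have hndeg : (P.comp (-(X ^ 2))).natDegree = 2 * P.natDegree := by
    rw [natDegree_comp]
    simp [mul_comm]
  have hPc_ne : P.comp (-(X ^ 2)) ≠ 0 := by
    intro h
    rw [h, natDegree_zero] at hndeg
    omega
  have hf0 : f ≠ 0 := fun h => hPc_ne (by rw [← hprod, h, zero_mul])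
  have hf'0 : f' ≠ 0 := fun h => hPc_ne (by rw [← hprod, h, mul_zero])
  have hsum : f.natDegree + f'.natDegree = 2 * P.natDegree := by
    rw [← hndeg, ← hprod, natDegree_mul hf0 hf'0]
  have hc : ((-(X ^ 2) : F[X]).comp (-X)) = -(X ^ 2) := by
    simp [neg_comp, pow_comp, neg_sq]
  have hf'comp : f' = f.comp (-X) := by
    simp only [hf_def, hf'_def, add_comp, mul_comp, X_comp, comp_assoc, hc]
    ring
  have hdeq : f'.natDegree = f.natDegree := by
    rw [hf'comp, natDegree_comp]
    simp
  have hdeg : f.natDegree = P.natDegree := by omega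
  -- key claim: any irreducible factor of P.comp (-(X^2)) has natDegree ≥ P.natDegree
  have claim : ∀ g : F[X], Irreducible g → g ∣ P.comp (-(X ^ 2)) →
      P.natDegree ≤ g.natDegree := by
    intro g hg hgd
    haveI : Fact (Irreducible g) := ⟨hg⟩
    have hg0 : g ≠ 0 := hg.ne_zero
    set L := AdjoinRoot g
    set s : L := AdjoinRoot.root g
    have hs : (aeval s) (P.comp (-(X ^ 2))) = 0 := by
      obtain ⟨k, hk⟩ := hgd
      rw [hk, map_mul, AdjoinRoot.aeval_eq, AdjoinRoot.mk_self, zero_mul]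
    rw [aeval_comp] at hs
    have hmin : minpoly F ((aeval s) (-(X ^ 2) : F[X])) = P :=
      (minpoly.eq_of_irreducible_of_monic hirr hs hP).symm
    haveI : FiniteDimensional F L := (AdjoinRoot.powerBasis hg0).finite
    have hle := minpoly.natDegree_le (A := F) ((aeval s) (-(X ^ 2) : F[X]))
    rw [hmin] at hle
    have hfr : Module.finrank F L = g.natDegree := by
      have := (AdjoinRoot.powerBasis hg0).finrank
      simpa [AdjoinRoot.powerBasis] using this
    omega
  -- now conclude
  obtain ⟨g, hg, hgd⟩ := WfDvdMonoid.exists_irreducible_factor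
    (fun hu => by
      have := natDegree_eq_zero_of_isUnit hu
      omega) hf0
  obtain ⟨h, hh⟩ := hgd
  have hgdvd : g ∣ P.comp (-(X ^ 2)) := ⟨h * f', by rw [← hprod, hh]; ring⟩
  have hgdeg := claim g hg hgdvd
  have hh0 : h ≠ 0 := fun h0 => hf0 (by rw [hh, h0, mul_zero])
  have hhdeg : h.natDegree = 0 := by
    have := natDegree_mul hg.ne_zero hh0
    rw [← hh, hdeg] at this
    omega
  have hhu : IsUnit h := by
    rw [Polynomial.eq_C_of_natDegree_eq_zero hhdeg]
    exact isUnit_C.2 (isUnit_iff_ne_zero.2 fun hc => hh0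
      (by rw [Polynomial.eq_C_of_natDegree_eq_zero hhdeg, hc, map_zero]))
  exact (Associated.irreducible ⟨hhu.unit, hh.symm⟩ hg)

theorem factors_irreducible (F : Type) [Field F] [Fintype F]
    (hq : Odd (Fintype.card F)) (P A B : F[X]) (hP : P.Monic) (hirr : Irreducible P)
    (hPAB : P = A ^ 2 + X * B ^ 2) :
    Irreducible (A.comp (-(X ^ 2)) + X * B.comp (-(X ^ 2))) ∧
      Irreducible (A.comp (-(X ^ 2)) - X * B.comp (-(X ^ 2))) := by
  refine ⟨key_irred F P A B hP hirr hPAB, ?_⟩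
  have h2 := key_irred F P A (-B) hP hirr (by rw [hPAB]; ring)
  have : A.comp (-(X ^ 2)) + X * (-B).comp (-(X ^ 2))
      = A.comp (-(X ^ 2)) - X * B.comp (-(X ^ 2)) := by
    rw [neg_comp]; ring
  rwa [this] at h2
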